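/- arXiv:2003.11261 — 3 statements merged into one kernel-verified Lean document; each statement's English description precedes it below -/
import Mathlib

section
/- Let A be an abelian category and U ⊆ A a non-empty full subcategory closed under kernels, cokernels and finite coproducts. Then U is closed under extensions: for any short exact sequence 0 → S → E → Q → 0 in A with S, Q ∈ U, if for every epimorphism A ↠ U with U ∈ U there is a morphism V → A with V ∈ U whose composite V → A → U is epi, then E ∈ U. -/
open CategoryTheory CategoryTheory.Limits

/-- Let `A` be an abelian category and `U ⊆ A` (given by the predicate `P`)
a non-empty full subcategory closed under kernels, cokernels and finite (binary)
coproducts (and isomorphisms). Assume the lifting property: for every epimorphism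
`A ↠ U` with `U ∈ U` there is a morphism `V → A` with `V ∈ U` whose composite with the
epimorphism is an epimorphism. Then `U` is closed under extensions: for any short exact
sequence `0 → S → E → Q → 0` with `S, Q ∈ U`, we have `E ∈ U`. -/
theorem stmt_1 {A : Type*} [Category A] [Abelian A] (P : A → Prop)
    (hne : ∃ X, P X)
    (hiso : ∀ {X Y : A}, (X ≅ Y) → P X → P Y)
    (hker : ∀ {X Y : A} (f : X ⟶ Y), P X → P Y → P (kernel f))
    (hcoker : ∀ {X Y : A} (f : X ⟶ Y), P X → P Y → P (cokernel f))
    (hcoprod : ∀ {X Y : A}, P X → P Y → P (X ⊞ Y))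
    (hlift : ∀ {B U : A} (p : B ⟶ U), Epi p → P U →
      ∃ (V : A) (v : V ⟶ B), P V ∧ Epi (v ≫ p))
    (S : ShortComplex A) (hS : S.ShortExact) (h₁ : P S.X₁) (h₃ : P S.X₃) :
    P S.X₂ := by
  have hMono : Mono S.f := hS.mono_f
  have hEpi : Epi S.g := hS.epi_g
  obtain ⟨V, v, hV, hvg⟩ := hlift S.g hEpi h₃
  haveI := hvg
  -- the map φ : X₁ ⊞ V ⟶ X₂
  set φ : (S.X₁ ⊞ V) ⟶ S.X₂ := biprod.desc S.f v with hφ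
  have hW : P (S.X₁ ⊞ V) := hcoprod h₁ hV
  -- φ is epi
  have hφepi : Epi φ := by
    rw [Preadditive.epi_iff_cancel_zero]
    intro R h hh
    have hfh : S.f ≫ h = 0 := by
      have := biprod.inl ≫= hh
      simpa [hφ] using this
    have hvh : v ≫ h = 0 := by
      have := biprod.inr ≫= hh
      simpa [hφ] using this
    obtain ⟨h', hh'⟩ := CokernelCofork.IsColimit.desc' hS.gIsCokernel h hfh
    simp only [Cofork.π_ofπ] at hh'
    have : (v ≫ S.g) ≫ h' = 0 := by
      rw [Category.assoc, hh', hvh]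
    have h'0 : h' = 0 := (cancel_epi (v ≫ S.g)).mp (by simpa using this)
    rw [← hh', h'0, comp_zero]
  -- the auxiliary kernel K' = ker (φ ≫ g)
  have hK' : P (kernel (φ ≫ S.g)) := hker (φ ≫ S.g) hW h₃
  have hcond : (kernel.ι (φ ≫ S.g) ≫ φ) ≫ S.g = 0 := by
    rw [Category.assoc, kernel.condition]
  obtain ⟨ψ, hψ⟩ := KernelFork.IsLimit.lift' hS.fIsKernel _ hcond
  -- kernel ψ ≅ kernel φ
  have hkψ : P (kernel ψ) := hker ψ hK' h₁
  -- map from kernel (ι' ≫ φ) to kernel φ and back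
  have hu : kernel.ι φ ≫ (φ ≫ S.g) = 0 := by
    rw [← Category.assoc, kernel.condition, zero_comp]
  let u : kernel φ ⟶ kernel (φ ≫ S.g) := kernel.lift _ (kernel.ι φ) hu
  have hu' : u ≫ kernel.ι (φ ≫ S.g) = kernel.ι φ := kernel.lift_ι _ _ _
  let a : kernel φ ⟶ kernel (kernel.ι (φ ≫ S.g) ≫ φ) := kernel.lift _ u (by
    rw [← Category.assoc, hu', kernel.condition])
  let b : kernel (kernel.ι (φ ≫ S.g) ≫ φ) ⟶ kernel φ := kernel.lift _
    (kernel.ι _ ≫ kernel.ι (φ ≫ S.g)) (by rw [Category.assoc, kernel.condition])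
  have hab : a ≫ b = 𝟙 _ := by
    rw [← cancel_mono (kernel.ι φ)]
    simp [a, b, hu', u]
  have hba : b ≫ a = 𝟙 _ := by
    rw [← cancel_mono (kernel.ι (kernel.ι (φ ≫ S.g) ≫ φ)),
        ← cancel_mono (kernel.ι (φ ≫ S.g))]
    simp [a, b, hu', u]
  have e1 : kernel (kernel.ι (φ ≫ S.g) ≫ φ) ≅ kernel φ := ⟨b, a, hba, hab⟩
  have e2 : kernel ψ ≅ kernel (kernel.ι (φ ≫ S.g) ≫ φ) :=
    (kernelCompMono ψ S.f).symm ≪≫ kernelIsoOfEq hψ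
  have hkφ : P (kernel φ) := hiso (e2 ≪≫ e1) hkψ
  -- X₂ is the cokernel of kernel.ι φ
  haveI := hφepi
  have hcolim := Abelian.epiIsCokernelOfKernel (KernelFork.ofι (kernel.ι φ)
    (kernel.condition φ)) (kernelIsKernel φ)
  have e3 : cokernel (kernel.ι φ) ≅ S.X₂ :=
    (colimit.isColimit _).coconePointUniqueUpToIso hcolim
  exact hiso e3 (hcoker (kernel.ι φ) hkφ hW)
end

section
/- Let A be an abelian category with exact coproducts and let I be a complex of injective objects of A. If I is coacyclic, then I is contractible. -/
open CategoryTheory CategoryTheory.Limits CategoryTheory.Pretriangulated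

variable {A : Type u} [Category.{v} A] [Abelian A]

/-- The totalization of a (short exact) sequence of complexes `K ⟶ L ⟶ M`, realized
(up to isomorphism in the homotopy category) as a shifted mapping cone of the canonical
map `Cone(f) ⟶ M`. -/
noncomputable def totSES {K L M : CochainComplex A ℤ} (f : K ⟶ L) (g : L ⟶ M)
    (hfg : f ≫ g = 0) : CochainComplex A ℤ :=
  (CochainComplex.mappingCone
    (CochainComplex.mappingCone.desc f 0 g (by simp [hfg])))⟦(-1 : ℤ)⟧

/-- A class of objects of the homotopy category which contains the totalizations of all
degreewise short exact sequences of complexes and is thick: closed under isomorphisms,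
zero objects, shifts, extensions (cones) and direct summands. -/
structure TotClosed (P : HomotopyCategory A (ComplexShape.up ℤ) → Prop) : Prop where
  tot : ∀ {K L M : CochainComplex A ℤ} (f : K ⟶ L) (g : L ⟶ M) (hfg : f ≫ g = 0),
    (ShortComplex.mk f g hfg).ShortExact →
    P ((HomotopyCategory.quotient A (ComplexShape.up ℤ)).obj (totSES f g hfg))
  zero : ∀ (X : HomotopyCategory A (ComplexShape.up ℤ)), IsZero X → P X
  iso : ∀ {X Y : HomotopyCategory A (ComplexShape.up ℤ)}, (X ≅ Y) → P X → P Y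
  shift : ∀ (X : HomotopyCategory A (ComplexShape.up ℤ)) (n : ℤ), P X → P (X⟦n⟧)
  ext₂ : ∀ (T : Triangle (HomotopyCategory A (ComplexShape.up ℤ))),
    T ∈ distinguishedTriangles → P T.obj₁ → P T.obj₃ → P T.obj₂
  smd : ∀ (X Y : HomotopyCategory A (ComplexShape.up ℤ)), P (X ⊞ Y) → P X

/-- A complex is absolutely acyclic if its image in the homotopy category belongs to
the minimal thick subcategory containing the totalizations of short exact sequences. -/
def IsAbsolutelyAcyclic (X : HomotopyCategory A (ComplexShape.up ℤ)) : Prop :=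
  ∀ P, TotClosed P → P X

/-- Closure under all existing coproducts. -/
def CoprodClosed (P : HomotopyCategory A (ComplexShape.up ℤ) → Prop) : Prop :=
  ∀ {ι : Type v} (F : ι → HomotopyCategory A (ComplexShape.up ℤ))
    (c : Cofan F), IsColimit c → (∀ i, P (F i)) → P c.pt

/-- A complex is coacyclic if its image in the homotopy category belongs to every thick
class containing the totalizations which is moreover closed under coproducts. -/
def IsCoacyclic (X : HomotopyCategory A (ComplexShape.up ℤ)) : Prop :=
  ∀ P, TotClosed P → CoprodClosed P → P X


open CochainComplex CochainComplex.HomComplex HomologicalComplex in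
lemma key_homotopy {K L M : CochainComplex A ℤ} (f : K ⟶ L) (g : L ⟶ M) (hfg : f ≫ g = 0)
    (hse : (ShortComplex.mk f g hfg).ShortExact)
    {eq : δ (-1) 0 (0 : Cochain K M (-1)) = Cochain.ofHom (f ≫ g)}
    (J : CochainComplex A ℤ) (hJ : ∀ n, Injective (J.X n))
    (u : mappingCone (mappingCone.desc f (0 : Cochain K M (-1)) g eq) ⟶ J) :
    Nonempty (Homotopy u 0) := by
  revert u
  set φ := mappingCone.desc f (0 : Cochain K M (-1)) g eq with hφ
  intro u
  -- degreewise short exactness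
  have hsep : ∀ p : ℤ, (ShortComplex.mk (f.f p) (g.f p)
      (congr_fun (congrArg HomologicalComplex.Hom.f hfg) p)).ShortExact :=
    fun p => hse.map_of_exact (HomologicalComplex.eval A (ComplexShape.up ℤ) p)
  have monof : ∀ p : ℤ, Mono (f.f p) := fun p => (hsep p).mono_f
  have epig : ∀ p : ℤ, Epi (g.f p) := fun p => (hsep p).epi_g
  -- data extracted from u
  set α : Cochain (mappingCone f) J (-1) :=
    (mappingCone.inl φ).comp (Cochain.ofHom u) (add_zero _) with hα
  set β : M ⟶ J := mappingCone.inr φ ≫ u with hβ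
  set a : Cochain K J (-2) := (mappingCone.inl f).comp α (by norm_num) with ha
  set b : Cochain L J (-1) := (Cochain.ofHom (mappingCone.inr f)).comp α (zero_add _) with hb
  have F0 : δ (-1) 0 α = Cochain.ofHom (φ ≫ β) := by
    rw [hα, δ_comp_ofHom, mappingCone.δ_inl, hβ, ← Cochain.ofHom_comp, Category.assoc]
  have R1 : δ (-2) (-1) a = -(Cochain.ofHom f).comp b (zero_add _) := by
    rw [ha, δ_comp (mappingCone.inl f) α (by norm_num) 0 0 (-1) (by norm_num) (by norm_num)
      (by norm_num), F0, mappingCone.δ_inl]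
    simp only [Cochain.ofHom_comp, hφ]
    rw [← Cochain.comp_assoc_of_second_is_zero_cochain, mappingCone.inl_desc,
      Cochain.zero_comp, zero_add,
      Cochain.comp_assoc_of_first_is_zero_cochain, ← hb]
    simp
  have R2 : δ (-1) 0 b = Cochain.ofHom (g ≫ β) := by
    rw [hb, δ_ofHom_comp, F0, ← Cochain.ofHom_comp, ← Category.assoc,
      mappingCone.inr_desc]
  -- construct q by injectivity
  set q : Cochain L J (-2) := Cochain.mk (fun p p' hpp' =>
    letI := hJ p'
    letI := monof p
    Injective.factorThru (-(a.v p p' hpp')) (f.f p)) with hqdef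
  have hq : (Cochain.ofHom f).comp q (zero_add (-2)) = -a := by
    ext p p' hpp'
    simp only [Cochain.zero_cochain_comp_v, Cochain.ofHom_v, Cochain.neg_v, hqdef, Cochain.mk_v]
    letI := hJ p'
    letI := monof p
    exact Injective.comp_factorThru _ _
  set t : Cochain L J (-1) := b - δ (-2) (-1) q with htdef
  have ht : (Cochain.ofHom f).comp t (zero_add (-1)) = 0 := by
    rw [htdef, Cochain.comp_sub, ← δ_ofHom_comp, hq, δ_neg, R1, neg_neg, sub_self]
  -- construct r by the cokernel property
  have hcond : ∀ (p p' : ℤ) (hpp' : p + (-1) = p'), f.f p ≫ t.v p p' hpp' = 0 := by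
    intro p p' hpp'
    have := Cochain.congr_v ht p p' (by omega)
    simpa only [Cochain.zero_cochain_comp_v, Cochain.ofHom_v, Cochain.zero_v] using this
  set r : Cochain M J (-1) := Cochain.mk (fun p p' hpp' =>
    (CokernelCofork.IsColimit.desc' (hsep p).gIsCokernel (t.v p p' hpp')
      (hcond p p' hpp')).1) with hrdef
  have hr : (Cochain.ofHom g).comp r (zero_add (-1)) = t := by
    ext p p' hpp'
    simp only [Cochain.zero_cochain_comp_v, Cochain.ofHom_v, hrdef, Cochain.mk_v]
    exact (CokernelCofork.IsColimit.desc' (hsep p).gIsCokernel (t.v p p' hpp')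
      (hcond p p' hpp')).2
  have hδt : δ (-1) 0 t = Cochain.ofHom (g ≫ β) := by
    rw [htdef, δ_sub, R2, δ_δ, sub_zero]
  have hδr : δ (-1) 0 r = Cochain.ofHom β := by
    have hc : (Cochain.ofHom g).comp (δ (-1) 0 r) (zero_add 0) =
        (Cochain.ofHom g).comp (Cochain.ofHom β) (zero_add 0) := by
      rw [← δ_ofHom_comp, hr, hδt, ← Cochain.ofHom_comp]
    ext p
    have h2 := Cochain.congr_v hc p p (add_zero p)
    simp only [Cochain.zero_cochain_comp_v, Cochain.ofHom_v] at h2 ⊢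
    exact (cancel_epi (g.f p)).1 h2
  -- the decomposition of α
  have αdec : α = (mappingCone.fst f).1.comp a (by norm_num) +
      (mappingCone.snd f).comp b (zero_add _) := by
    rw [mappingCone.ext_cochain_from_iff f (-2) (-1) (by norm_num)]
    constructor
    · simp [ha]
    · simp [hb]
  have hφc : (Cochain.ofHom φ).comp r (zero_add (-1)) =
      (mappingCone.snd f).comp t (zero_add _) := by
    rw [hφ, mappingCone.ofHom_desc, mappingCone.descCochain, Cochain.add_comp,
      Cochain.comp_zero, Cochain.zero_comp, zero_add,
      Cochain.comp_assoc_of_first_is_zero_cochain, hr]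
  have hδγ₁ : δ (-2) (-1) ((mappingCone.snd f).comp q (zero_add (-2))) =
      (mappingCone.fst f).1.comp a (by norm_num) +
        (mappingCone.snd f).comp (δ (-2) (-1) q) (zero_add _) := by
    rw [δ_zero_cochain_comp _ _ _ (by norm_num : (-2:ℤ) + 1 = -1), mappingCone.δ_snd,
      Cochain.neg_comp, Cochain.comp_assoc_of_second_is_zero_cochain, hq]
    simp only [show ((-2:ℤ)).negOnePow = 1 by decide, one_smul, Cochain.comp_neg, neg_neg]
    abel
  refine ⟨mappingCone.descHomotopy φ u 0 ((mappingCone.snd f).comp q (zero_add (-2))) r ?_ ?_⟩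
  · rw [hδγ₁, hφc, ← hα]
    simp only [Cochain.ofHom_zero, Cochain.comp_zero, add_zero]
    rw [αdec, htdef]
    simp only [Cochain.comp_sub]
    abel
  · rw [hδr, ← hβ]
    simp only [comp_zero, Cochain.ofHom_zero, add_zero]

/-- The class of complexes (in the homotopy category) such that every morphism to a
complex of injectives is zero. -/
def Pinj (X : HomotopyCategory A (ComplexShape.up ℤ)) : Prop :=
  ∀ (J : CochainComplex A ℤ), (∀ n, Injective (J.X n)) →
    ∀ (φ : X ⟶ (HomotopyCategory.quotient A (ComplexShape.up ℤ)).obj J), φ = 0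

lemma Pinj_iso {X Y : HomotopyCategory A (ComplexShape.up ℤ)} (e : X ≅ Y)
    (hX : Pinj X) : Pinj Y := by
  intro J hJ φ
  rw [← cancel_epi e.hom, comp_zero]
  exact hX J hJ (e.hom ≫ φ)

lemma Pinj_shift (X : HomotopyCategory A (ComplexShape.up ℤ)) (n : ℤ) (hX : Pinj X) :
    Pinj (X⟦n⟧) := by
  intro J hJ φ
  have hJ' : ∀ i, Injective ((J⟦(-n : ℤ)⟧).X i) := fun i => hJ (i + (-n))
  have h := hX _ hJ'
    ((shiftFunctorCompIsoId (HomotopyCategory A (ComplexShape.up ℤ)) n (-n)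
        (by omega)).inv.app X ≫
      (CategoryTheory.shiftFunctor (HomotopyCategory A (ComplexShape.up ℤ)) (-n)).map φ ≫
      (((HomotopyCategory.quotient A (ComplexShape.up ℤ)).commShiftIso (-n)).app J).inv)
  have h2 : (CategoryTheory.shiftFunctor (HomotopyCategory A (ComplexShape.up ℤ))
      (-n)).map φ = 0 := by
    rw [← cancel_epi ((shiftFunctorCompIsoId (HomotopyCategory A (ComplexShape.up ℤ)) n (-n)
      (by omega)).inv.app X), ← cancel_mono ((((HomotopyCategory.quotient A (ComplexShape.up ℤ)).commShiftIso (-n)).app J).inv)]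
    simpa using h
  exact (CategoryTheory.shiftFunctor (HomotopyCategory A (ComplexShape.up ℤ))
    (-n)).map_injective (by rw [h2, Functor.map_zero])


lemma Pinj_tot {K L M : CochainComplex A ℤ} (f : K ⟶ L) (g : L ⟶ M) (hfg : f ≫ g = 0)
    (hse : (ShortComplex.mk f g hfg).ShortExact) :
    Pinj ((HomotopyCategory.quotient A (ComplexShape.up ℤ)).obj (totSES f g hfg)) := by
  have h1 : Pinj ((HomotopyCategory.quotient A (ComplexShape.up ℤ)).obj
      (CochainComplex.mappingCone (CochainComplex.mappingCone.desc f 0 g (by simp [hfg])))) := by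
    intro J hJ ψ
    obtain ⟨w, hw⟩ := (HomotopyCategory.quotient A (ComplexShape.up ℤ)).map_surjective ψ
    obtain ⟨h⟩ := key_homotopy f g hfg hse J hJ w
    rw [← hw, HomotopyCategory.eq_of_homotopy _ _ h, Functor.map_zero]
  have h2 := Pinj_shift _ (-1) h1
  exact Pinj_iso ((((HomotopyCategory.quotient A
    (ComplexShape.up ℤ)).commShiftIso (-1 : ℤ)).app _).symm) h2

lemma totClosed_Pinj : TotClosed (Pinj (A := A)) where
  tot f g hfg hse := Pinj_tot f g hfg hse
  zero X hX := fun J hJ φ => hX.eq_of_src φ 0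
  iso e hX := Pinj_iso e hX
  shift X n hX := Pinj_shift X n hX
  ext₂ T hT h1 h3 := by
    intro J hJ φ
    obtain ⟨k, hk⟩ := Triangle.yoneda_exact₂ T hT φ (h1 J hJ (T.mor₁ ≫ φ))
    rw [hk, h3 J hJ k, comp_zero]
  smd X Y hXY := by
    intro J hJ φ
    have h := hXY J hJ (biprod.desc φ 0)
    calc φ = biprod.inl ≫ biprod.desc φ 0 := by simp
    _ = 0 := by rw [h, comp_zero]

lemma coprodClosed_Pinj : CoprodClosed (Pinj (A := A)) := by
  intro ι F c hc hF J hJ φ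
  apply hc.hom_ext
  rintro ⟨i⟩
  rw [comp_zero]
  exact hF i J hJ (c.ι.app ⟨i⟩ ≫ φ)

/-- In an abelian category with exact coproducts, every coacyclic complex
of injective objects is contractible. -/
theorem stmt_8 [HasCoproducts.{v} A] [AB4.{v} A]
    (I : CochainComplex A ℤ) (hinj : ∀ n, Injective (I.X n))
    (hco : IsCoacyclic ((HomotopyCategory.quotient A (ComplexShape.up ℤ)).obj I)) :
    Nonempty (Homotopy (𝟙 I) 0) := by
  have h := hco Pinj totClosed_Pinj coprodClosed_Pinj I hinj
    (𝟙 ((HomotopyCategory.quotient A (ComplexShape.up ℤ)).obj I))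
  exact ⟨HomotopyCategory.homotopyOfEq _ _ (by
    rw [CategoryTheory.Functor.map_id, Functor.map_zero, h])⟩
end

section
/- Let A be a Grothendieck abelian category, I a directed partially ordered set, and consider the functor category A^I of I-indexed diagrams. Then for every j ∈ I, the evaluation functor A^I → A at j sends injective objects of A^I to injective objects of A. -/
open CategoryTheory CategoryTheory.Limits

section Aux

universe w v u

variable {C : Type u} [Category.{v} C]

/-- A coproduct over an empty index type is initial. -/
noncomputable def auxIsInitialOfEmpty {β : Type w} [IsEmpty β] (f : β → C)
    [HasCoproduct f] : IsInitial (∐ f) :=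
  IsInitial.ofUniqueHom (fun Y => Sigma.desc (fun b => isEmptyElim b))
    (fun Y m => by
      apply Sigma.hom_ext
      exact fun b => isEmptyElim b)

lemma auxMonoSigmaMapSubsingleton [HasZeroMorphisms C] {β : Type w} [Subsingleton β]
    {X Y : C} (f : X ⟶ Y) [Mono f]
    [HasCoproduct (fun _ : β => X)] [HasCoproduct (fun _ : β => Y)] :
    Mono (Limits.Sigma.map (fun _ : β => f)) := by
  rcases isEmpty_or_nonempty β with h | h
  · have hz : IsZero (∐ fun _ : β => X) := (auxIsInitialOfEmpty _).isZero
    exact ⟨fun g h _ => hz.eq_of_tgt g h⟩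
  · obtain ⟨b0⟩ := h
    have hι : ∀ (Z : C) [HasCoproduct (fun _ : β => Z)],
        IsIso (Sigma.ι (fun _ : β => Z) b0) := fun Z _ =>
      ⟨Sigma.desc fun _ => 𝟙 Z, by simp, by
        apply Sigma.hom_ext
        intro b
        have hb : b = b0 := Subsingleton.elim _ _
        subst hb
        simp⟩
    haveI := hι X
    haveI := hι Y
    have hfac : Sigma.ι (fun _ : β => X) b0 ≫ Limits.Sigma.map (fun _ : β => f)
        = f ≫ Sigma.ι (fun _ : β => Y) b0 := by simp
    have heq2 : Limits.Sigma.map (fun _ : β => f) =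
        inv (Sigma.ι (fun _ : β => X) b0) ≫ f ≫ Sigma.ι (fun _ : β => Y) b0 := by
      rw [← hfac, IsIso.inv_hom_id_assoc]
    rw [heq2]
    infer_instance

variable {I : Type w} [PartialOrder I]

instance auxPreservesMono [Abelian C] (j : I) :
    (evaluationLeftAdjoint C j).PreservesMonomorphisms := by
  constructor
  intro X Y f hf
  haveI key : ∀ i, Mono (((evaluationLeftAdjoint C j).map f).app i) := by
    intro i
    have heq : ((evaluationLeftAdjoint C j).map f).app i =
      Limits.Sigma.map (fun _ : (j ⟶ i) => f) := by
      apply Sigma.hom_ext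
      intro b
      simp
      exact (Limits.Sigma.ι_desc _ _).trans (Limits.Sigma.ι_map (f := fun _ : (j ⟶ i) => X) (g := fun _ : (j ⟶ i) => Y) (fun _ => f) b).symm
    rw [heq]
    exact auxMonoSigmaMapSubsingleton f
  exact NatTrans.mono_of_mono_app _

end Aux

/-- Let `A` be a Grothendieck abelian category (abelian, with a generator
and exact filtered colimits) and `I` a directed partially ordered set.  Then for every
`j ∈ I`, the evaluation functor `A^I ⥤ A` at `j` sends injective objects of the diagram
category `A^I` to injective objects of `A`. -/
theorem stmt_13 {A : Type u} [Category.{v} A] [Abelian A]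
    [HasFilteredColimits A] [AB5 A] (G : A) (hG : IsSeparator G)
    (I : Type u₁) [PartialOrder I] [IsDirected I (· ≤ ·)] (j : I)
    (F : I ⥤ A) (hF : Injective F) :
    Injective (F.obj j) := by
  have := hF
  exact Injective.injective_of_adjoint (evaluationAdjunctionRight A j) F
end
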